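/- For all natural numbers n ≥ 2 and s ≥ 1, the value s/(ns+1) lies in the n-th maximum loneliness spectrum; i.e., there exist nonzero integers v1,...,vn with ML(v1,...,vn) = s/(ns+1). -/

import Mathlib

/-- Distance from a real number to the nearest integer. -/
noncomputable def distToInt (x : ℝ) : ℝ := ⨅ m : ℤ, |x - m|

lemma distToInt_eq_round (x : ℝ) : distToInt x = |x - round x| := by
  unfold distToInt
  refine le_antisymm (ciInf_le ⟨0, ?_⟩ (round x)) (le_ciInf fun m => round_le x m)
  rintro y ⟨m, rfl⟩; positivity

lemma distToInt_nonneg (x : ℝ) : 0 ≤ distToInt x := by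
  rw [distToInt_eq_round]; positivity

lemma distToInt_le (x : ℝ) (m : ℤ) : distToInt x ≤ |x - m| := by
  rw [distToInt_eq_round]; exact round_le x m

lemma distToInt_le_half (x : ℝ) : distToInt x ≤ 1/2 := by
  rw [distToInt_eq_round]; exact abs_sub_round x

private lemma distToInt_neg_le (x : ℝ) : distToInt (-x) ≤ distToInt x := by
  calc distToInt (-x) ≤ |(-x) - (-(round x) : ℤ)| := distToInt_le _ _
  _ = |x - round x| := by push_cast; rw [show -x - -(round x:ℝ) = -(x - round x) by ring, abs_neg]
  _ = distToInt x := (distToInt_eq_round x).symm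

lemma distToInt_neg (x : ℝ) : distToInt (-x) = distToInt x := by
  refine le_antisymm (distToInt_neg_le x) ?_
  have := distToInt_neg_le (-x); rwa [neg_neg] at this

lemma le_distToInt {x : ℝ} {c : ℝ} (h : ∀ m : ℤ, c ≤ |x - m|) : c ≤ distToInt x := by
  rw [distToInt_eq_round]; exact h _

lemma distToInt_nsmul_le (k : ℕ) (x : ℝ) : distToInt (k * x) ≤ k * distToInt x := by
  calc distToInt (k * x) ≤ |k * x - (k * round x : ℤ)| := distToInt_le _ _
  _ = k * |x - round x| := by push_cast; rw [show (k:ℝ)*x - k*round x = k*(x - round x) by ring,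
      abs_mul, Nat.abs_cast]
  _ = k * distToInt x := by rw [distToInt_eq_round]

lemma distToInt_int_abs (z : ℤ) (t : ℝ) :
    distToInt ((z.natAbs : ℝ) * t) = distToInt ((z : ℝ) * t) := by
  rw [Nat.cast_natAbs, Int.cast_abs]
  rcases le_or_gt 0 (z:ℝ) with hz | hz
  · rw [abs_of_nonneg hz]
  · rw [abs_of_neg hz, show (-(z:ℝ)) * t = -((z:ℝ) * t) by ring, distToInt_neg]

lemma lemA (n s : ℕ) (hn : 2 ≤ n) (hs : 1 ≤ s) (t : ℝ)
    (h : ∀ k : ℕ, 1 ≤ k → k ≤ n - 1 → (s : ℝ)/(n*s+1) < distToInt (k * t)) :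
    distToInt (n * t) ≤ 1/(n*s+1) := by
  set Nr : ℝ := n*s+1 with hNr
  have hNrpos : 0 < Nr := by positivity
  clear_value Nr
  by_contra hcon
  push_neg at hcon
  -- setup
  set f : Fin (n+1) → ℝ := fun k => Int.fract (k.val * t) with hf
  set σ := Tuple.sort f with hσ
  set y : Fin (n+1) → ℝ := f ∘ σ with hy
  have hymono : Monotone y := Tuple.monotone_sort f
  have hy01 : ∀ j, 0 ≤ y j ∧ y j < 1 := fun j => ⟨Int.fract_nonneg _, Int.fract_lt_one _⟩
  set A : Fin (n+1) → ℝ := fun i => y (i+1) - y i + (if i = Fin.last n then 1 else 0) with hA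
  -- sum of A = 1
  have hsum : ∑ i, A i = 1 := by
    rw [hA, Finset.sum_add_distrib]
    have h1 : ∑ i : Fin (n+1), (y (i+1) - y i) = 0 := by
      rw [Finset.sum_sub_distrib]
      rw [Fintype.sum_equiv (Equiv.addRight (1 : Fin (n+1))) (fun i => y (i+1)) y (fun i => rfl)]
      ring
    have h2 : ∑ i : Fin (n+1), (if i = Fin.last n then (1:ℝ) else 0) = 1 := by
      rw [Finset.sum_ite_eq' Finset.univ (Fin.last n) (fun _ => (1:ℝ))]
      simp
    rw [h1, h2]; ring
  -- last + 1 = 0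
  have hlast1 : (Fin.last n) + 1 = (0 : Fin (n+1)) := by
    apply Fin.ext
    simp [Fin.val_add, Fin.last]
  -- each A i is nonneg and equals (a-b)*t - M
  have harc : ∀ i : Fin (n+1), ∃ M : ℤ,
      A i = (((σ (i+1)).val : ℝ) - ((σ i).val : ℝ)) * t - M ∧ 0 ≤ A i := by
    intro i
    have hyexp : ∀ j, y j = ((σ j).val : ℝ) * t - ⌊((σ j).val : ℝ) * t⌋ := fun j => rfl
    by_cases hi : i = Fin.last n
    · subst hi
      refine ⟨⌊((σ (Fin.last n+1)).val : ℝ) * t⌋ - ⌊((σ (Fin.last n)).val : ℝ) * t⌋ - 1, ?_, ?_⟩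
      · rw [hA]; simp only [if_pos rfl, if_true]; rw [hyexp, hyexp]; push_cast; ring
      · rw [hA]; simp only [if_pos rfl, if_true]
        have := (hy01 (Fin.last n + 1)).1
        have := (hy01 (Fin.last n)).2
        linarith
    · refine ⟨⌊((σ (i+1)).val : ℝ) * t⌋ - ⌊((σ i).val : ℝ) * t⌋, ?_, ?_⟩
      · rw [hA]; simp only [hi, if_neg hi, hyexp]; push_cast; ring
      · rw [hA]; simp only [if_neg hi]
        have hle : i ≤ i + 1 := by
          have hv : (i+1).val = i.val + 1 := by
            apply Fin.val_add_one_of_lt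
            exact lt_of_le_of_ne (Fin.le_last i) hi
          rw [Fin.le_def, hv]; omega
        have := hymono hle
        linarith
  -- index-difference function
  set d : Fin (n+1) → ℕ := fun i => (((σ (i+1)).val : ℤ) - ((σ i).val : ℤ)).natAbs with hd
  have hAge : ∀ i, distToInt ((d i : ℝ) * t) ≤ A i := by
    intro i
    obtain ⟨M, hM, hM0⟩ := harc i
    have habs : A i = |(((σ (i+1)).val : ℝ) - ((σ i).val : ℝ)) * t - M| := by
      rw [hM] at hM0 ⊢
      exact (abs_of_nonneg hM0).symm
    have hcast : (((((σ (i+1)).val : ℤ) - ((σ i).val : ℤ)) : ℤ) : ℝ)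
        = ((σ (i+1)).val : ℝ) - ((σ i).val : ℝ) := by push_cast; ring
    rw [habs, hd]
    rw [distToInt_int_abs, hcast]
    exact distToInt_le _ M
  -- 1 + 1 ≠ ... basic Fin facts
  have h10 : (1 : Fin (n+1)) ≠ 0 := by
    intro hEq
    have h2 := congrArg Fin.val hEq
    rw [Fin.val_one', Fin.val_zero, Nat.mod_eq_of_lt (by omega)] at h2
    omega
  have haddne : ∀ i : Fin (n+1), i + 1 ≠ i := by
    intro i hEq
    have : i + 1 = i + 0 := by rw [add_zero]; exact hEq
    exact h10 (add_left_cancel this)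
  have hd1 : ∀ i, 1 ≤ d i := by
    intro i
    have hne : (σ (i+1)).val ≠ (σ i).val := by
      intro hEq
      exact haddne i (σ.injective (Fin.ext hEq))
    simp only [hd]; omega
  have hdn : ∀ i, d i ≤ n := by
    intro i
    have h1 := (σ (i+1)).isLt
    have h2 := (σ i).isLt
    simp only [hd]; omega
  -- uniqueness of the bad index
  have huniq : ∀ i j, d i = n → d j = n → i = j := by
    intro i j hi hj
    have hvi1 := (σ (i+1)).isLt
    have hvi0 := (σ i).isLt
    have hvj1 := (σ (j+1)).isLt
    have hvj0 := (σ j).isLt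
    simp only [hd] at hi hj
    have hipat : ((σ (i+1)).val = n ∧ (σ i).val = 0) ∨ ((σ (i+1)).val = 0 ∧ (σ i).val = n) := by
      omega
    have hjpat : ((σ (j+1)).val = n ∧ (σ j).val = 0) ∨ ((σ (j+1)).val = 0 ∧ (σ j).val = n) := by
      omega
    have hinj : ∀ p q : Fin (n+1), (σ p).val = (σ q).val → p = q :=
      fun p q hpq => σ.injective (Fin.ext hpq)
    have h20 : (2 : Fin (n+1)) ≠ 0 := by
      intro hEq
      have h2 := congrArg Fin.val hEq
      have hv2 : ((2 : Fin (n+1))).val = 2 % (n+1) := by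
        rw [show (2 : Fin (n+1)) = 1 + 1 by ext; simp [Fin.val_add], Fin.val_add, Fin.val_one']
        rw [Nat.mod_eq_of_lt (show 1 < n+1 by omega)]
      rw [hv2, Fin.val_zero, Nat.mod_eq_of_lt (by omega)] at h2
      omega
    rcases hipat with ⟨ha, hb⟩ | ⟨ha, hb⟩ <;> rcases hjpat with ⟨hc, he⟩ | ⟨hc, he⟩
    · exact add_right_cancel (hinj _ _ (ha.trans hc.symm))
    · have h1 : i + 1 = j := hinj _ _ (ha.trans he.symm)
      have h2 : j + 1 = i := hinj _ _ (hc.trans hb.symm)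
      exfalso
      have : i + 2 = i := by
        rw [show (2 : Fin (n+1)) = 1 + 1 by ext; simp [Fin.val_add], ← add_assoc, h1, h2]
      have := add_left_cancel (this.trans (add_zero i).symm)
      exact h20 this
    · have h1 : i + 1 = j := hinj _ _ (ha.trans he.symm)
      have h2 : j + 1 = i := hinj _ _ (hc.trans hb.symm)
      exfalso
      have : i + 2 = i := by
        rw [show (2 : Fin (n+1)) = 1 + 1 by ext; simp [Fin.val_add], ← add_assoc, h1, h2]
      have := add_left_cancel (this.trans (add_zero i).symm)
      exact h20 this
    · exact add_right_cancel (hinj _ _ (ha.trans hc.symm))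
  -- pick the designated index
  obtain ⟨i₀, hi₀⟩ : ∃ i₀ : Fin (n+1), ∀ i, i ≠ i₀ → d i ≤ n - 1 := by
    by_cases hB : ∃ i, d i = n
    · obtain ⟨i₀, h0⟩ := hB
      refine ⟨i₀, fun i hne => ?_⟩
      have hle := hdn i
      have : d i ≠ n := fun hEq => hne (huniq i i₀ hEq h0)
      omega
    · push_neg at hB
      exact ⟨0, fun i _ => by have := hdn i; have := hB i; omega⟩
  have hs1 : (1:ℝ) ≤ (s:ℝ) := by exact_mod_cast hs
  have hAi₀ : 1/Nr < A i₀ := by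
    refine lt_of_lt_of_le ?_ (hAge i₀)
    rcases eq_or_lt_of_le (hdn i₀) with hEq | hlt
    · rw [hEq]; exact hcon
    · have hh := h (d i₀) (hd1 i₀) (by omega)
      have : (1:ℝ)/Nr ≤ (s:ℝ)/Nr := by gcongr
      linarith
  have hAi : ∀ i ∈ Finset.univ.erase i₀, (s:ℝ)/Nr < A i := by
    intro i hi
    have hne := Finset.ne_of_mem_erase hi
    exact lt_of_lt_of_le (h (d i) (hd1 i) (hi₀ i hne)) (hAge i)
  have hcard : (Finset.univ.erase i₀).card = n := by
    rw [Finset.card_erase_of_mem (Finset.mem_univ _), Finset.card_univ, Fintype.card_fin]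
    omega
  have hne : (Finset.univ.erase i₀).Nonempty := by
    rw [← Finset.card_pos, hcard]; omega
  have hsum2 : ∑ i ∈ Finset.univ.erase i₀, ((s:ℝ)/Nr) < ∑ i ∈ Finset.univ.erase i₀, A i :=
    Finset.sum_lt_sum_of_nonempty hne hAi
  rw [Finset.sum_const, hcard, nsmul_eq_mul] at hsum2
  have hsplit : A i₀ + ∑ i ∈ Finset.univ.erase i₀, A i = ∑ i, A i :=
    Finset.add_sum_erase _ _ (Finset.mem_univ _)
  clear_value A d y σ f
  have hfinal : 1/Nr + (n:ℝ) * ((s:ℝ)/Nr) = 1 := by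
    rw [hNr]; field_simp; ring
  rw [hsum] at hsplit
  linarith



lemma key_ineq (N c sI m : ℤ) (hN : 0 < N) (h1 : sI ≤ c) (h2 : c ≤ N - sI) :
    (sI : ℝ)/(N : ℝ) ≤ |(c : ℝ)/(N : ℝ) - (m : ℝ)| := by
  have hNR : (0:ℝ) < (N:ℝ) := by exact_mod_cast hN
  have habs : (c:ℝ)/(N:ℝ) - m = ((c - m*N : ℤ) : ℝ)/(N:ℝ) := by
    push_cast; field_simp
  rw [habs, abs_div, abs_of_pos hNR]
  gcongr
  have hint : sI ≤ |c - m*N| := by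
    rcases le_or_gt m 0 with hm | hm
    · have hmn : m * N ≤ 0 := mul_nonpos_iff.mpr (Or.inr ⟨hm, hN.le⟩)
      have := le_abs_self (c - m*N)
      linarith
    · have hmn : N ≤ m * N := le_mul_of_one_le_left hN.le hm
      have := neg_le_abs (c - m*N)
      linarith
  exact_mod_cast hint

/-- Maximum loneliness of a tuple of speeds. -/
noncomputable def ML {n : ℕ} (v : Fin n → ℤ) : ℝ :=
  ⨆ t : ℝ, ⨅ i : Fin n, distToInt (t * v i)

theorem spectrum_contains_s_over_ns_plus_one (n s : ℕ) (hn : 2 ≤ n) (hs : 1 ≤ s) :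
    ∃ v : Fin n → ℤ, (∀ i, v i ≠ 0) ∧ ML v = (s : ℝ) / (n * s + 1) := by
  haveI : Nonempty (Fin n) := ⟨⟨0, by omega⟩⟩
  set Nr : ℝ := (n:ℝ) * (s:ℝ) + 1 with hNrdef
  have hNrpos : 0 < Nr := by positivity
  set v : Fin n → ℤ := fun i => if (i:ℕ) + 1 < n then ((i:ℕ) + 1 : ℤ) else (n:ℤ) * (s:ℤ) with hv
  refine ⟨v, ?_, ?_⟩
  · intro i
    rw [hv]
    by_cases hcase : (i:ℕ) + 1 < n
    · simp only [if_pos hcase]; positivity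
    · simp only [if_neg hcase]; positivity
  -- bounded below facts
  have hbb : ∀ t : ℝ, BddBelow (Set.range fun i : Fin n => distToInt (t * v i)) := by
    intro t
    exact ⟨0, by rintro x ⟨i, rfl⟩; exact distToInt_nonneg _⟩
  set F : ℝ → ℝ := fun t => ⨅ i : Fin n, distToInt (t * v i) with hF
  have hba : BddAbove (Set.range F) := by
    refine ⟨1/2, ?_⟩
    rintro x ⟨t, rfl⟩
    exact ciInf_le_of_le (hbb t) (Classical.arbitrary _) (distToInt_le_half _)
  -- upper bound
  have hupper : ∀ t : ℝ, F t ≤ (s:ℝ)/Nr := by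
    intro t
    by_cases hH : ∀ k : ℕ, 1 ≤ k → k ≤ n - 1 → (s : ℝ)/((n:ℝ)*(s:ℝ)+1) < distToInt ((k:ℝ) * t)
    · have hlem := lemA n s hn hs t hH
      refine ciInf_le_of_le (hbb t) ⟨n-1, by omega⟩ ?_
      have hveq : v ⟨n-1, by omega⟩ = (n:ℤ) * (s:ℤ) := by
        show (if n - 1 + 1 < n then ((n - 1 : ℕ) : ℤ) + 1 else (n:ℤ)*(s:ℤ)) = (n:ℤ)*(s:ℤ)
        rw [if_neg (by omega)]
      rw [hveq]
      have heq : t * (((n:ℤ) * (s:ℤ) : ℤ) : ℝ) = (s:ℝ) * ((n:ℝ) * t) := by push_cast; ring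
      rw [heq]
      calc distToInt ((s:ℝ) * ((n:ℝ) * t)) ≤ (s:ℝ) * distToInt ((n:ℝ) * t) :=
            distToInt_nsmul_le s ((n:ℝ) * t)
        _ ≤ (s:ℝ) * (1/((n:ℝ)*(s:ℝ)+1)) := by
            apply mul_le_mul_of_nonneg_left hlem (by positivity)
        _ = (s:ℝ)/Nr := by rw [hNrdef]; ring
    · push_neg at hH
      obtain ⟨k, hk1, hk2, hk3⟩ := hH
      refine ciInf_le_of_le (hbb t) ⟨k-1, by omega⟩ ?_
      have hveq : v ⟨k-1, by omega⟩ = (k : ℤ) := by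
        show (if k - 1 + 1 < n then ((k - 1 : ℕ) : ℤ) + 1 else (n:ℤ)*(s:ℤ)) = (k : ℤ)
        rw [if_pos (by omega)]
        omega
      rw [hveq]
      have heq : t * ((k:ℤ) : ℝ) = (k:ℝ) * t := by push_cast; ring
      rw [heq]
      exact hk3.trans_eq (by rw [hNrdef])
  -- lower bound at t₀
  have hlower : (s:ℝ)/Nr ≤ F ((s:ℝ)/Nr) := by
    apply le_ciInf
    intro i
    by_cases hcase : (i:ℕ) + 1 < n
    · have hveq : v i = ((i:ℕ) + 1 : ℤ) := by rw [hv]; simp only [if_pos hcase]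
      rw [hveq]
      apply le_distToInt
      intro m
      have heq : (s:ℝ)/Nr * ((((i:ℕ) + 1 : ℤ)) : ℝ) - m
          = ((((i:ℕ)+1) * s : ℤ) : ℝ)/(((n*s+1 : ℕ) : ℤ) : ℝ) - (m:ℝ) := by
        rw [hNrdef]; push_cast; field_simp
      have hNcast : (s:ℝ)/Nr = ((s:ℤ):ℝ)/((((n*s+1 : ℕ) : ℤ)):ℝ) := by
        rw [hNrdef]; push_cast; ring_nf
      rw [heq, hNcast]
      apply key_ineq
      · exact_mod_cast Nat.succ_le_of_lt (by omega)
      · -- s ≤ (i+1)*s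
        have : (1:ℤ) ≤ ((i:ℕ) + 1 : ℤ) := by exact_mod_cast Nat.one_le_iff_ne_zero.mpr (by omega)
        nlinarith [show (0:ℤ) ≤ (s:ℤ) by positivity]
      · -- (i+1)*s ≤ (ns+1) - s
        have h1 : ((i:ℕ) + 1 : ℤ) + 1 ≤ (n:ℤ) := by exact_mod_cast (by omega : (i:ℕ) + 2 ≤ n)
        have h2 : (0:ℤ) ≤ (s:ℤ) := by positivity
        push_cast
        nlinarith
    · have hveq : v i = (n:ℤ) * (s:ℤ) := by rw [hv]; simp only [if_neg hcase]
      rw [hveq]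
      apply le_distToInt
      intro m
      have heq : (s:ℝ)/Nr * (((n:ℤ) * (s:ℤ) : ℤ) : ℝ) - m
          = ((((n*s+1 : ℕ) : ℤ) - (s:ℤ) : ℤ) : ℝ)/(((n*s+1 : ℕ) : ℤ) : ℝ) - ((m - s + 1 : ℤ) : ℝ) := by
        rw [hNrdef]; push_cast; field_simp; ring
      have hNcast : (s:ℝ)/Nr = ((s:ℤ):ℝ)/((((n*s+1 : ℕ) : ℤ)):ℝ) := by
        rw [hNrdef]; push_cast; ring_nf
      rw [heq, hNcast]
      apply key_ineq
      · exact_mod_cast Nat.succ_le_of_lt (by omega)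
      · -- s ≤ (ns+1) - s
        have h2 : (0:ℤ) ≤ (s:ℤ) := by positivity
        have h3 : (2:ℤ) ≤ (n:ℤ) := by exact_mod_cast hn
        push_cast
        nlinarith
      · push_cast; ring_nf
        nlinarith [show (0:ℤ) ≤ (s:ℤ) by positivity]
  -- conclude
  rw [ML]
  have hML_le : (⨆ t : ℝ, F t) ≤ (s:ℝ)/Nr := Real.iSup_le hupper (by positivity)
  have hML_ge : (s:ℝ)/Nr ≤ (⨆ t : ℝ, F t) := le_ciSup_of_le hba ((s:ℝ)/Nr) hlower
  have : (⨆ t : ℝ, F t) = (s:ℝ)/Nr := le_antisymm hML_le hML_ge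
  rw [hF] at this
  rw [this, hNrdef]
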